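/- In the complete expansion G = K[C5](m1,...,m5) with cliques V1,...,V5, if V1 ∪ V2 is a maximum clique, then |V3| <= |V1|, |V5| <= |V2|, and if additionally |V(G)| <= 2·omega(G) then |V3| + |V4| + |V5| <= omega(G). -/

import Mathlib

open SimpleGraph Finset

/-- `G` contains an induced copy of `H`. -/
def HasInducedCopy {V W : Type*} (G : SimpleGraph V) (H : SimpleGraph W) : Prop :=
  ∃ f : W ↪ V, ∀ a b, G.Adj (f a) (f b) ↔ H.Adj a b

/-- The cycle on `ZMod n` (for `n ≥ 3`). -/
def cyc (n : ℕ) : SimpleGraph (ZMod n) where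
  Adj i j := i ≠ j ∧ (i = j + 1 ∨ j = i + 1)
  symm := ⟨fun i j h => ⟨h.1.symm, h.2.symm⟩⟩
  loopless := ⟨fun i h => h.1 rfl⟩

/-- Kite: diamond (K4 minus an edge) plus a pendant vertex adjacent to a degree-3 vertex. -/
def kite : SimpleGraph (Fin 5) :=
  SimpleGraph.fromEdgeSet {s(0,1), s(0,2), s(1,2), s(1,3), s(2,3), s(1,4)}

/-- Bull: triangle with two pendant edges at distinct vertices. -/
def bull : SimpleGraph (Fin 5) :=
  SimpleGraph.fromEdgeSet {s(0,1), s(0,2), s(1,2), s(0,3), s(1,4)}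

/-- Independent expansion of the cycle `C_n`. -/
def indExp (n : ℕ) (m : ZMod n → ℕ) : SimpleGraph (Σ i : ZMod n, Fin (m i)) where
  Adj x y := x.1 ≠ y.1 ∧ (x.1 = y.1 + 1 ∨ y.1 = x.1 + 1)
  symm := ⟨fun x y h => ⟨h.1.symm, h.2.symm⟩⟩
  loopless := ⟨fun x h => h.1 rfl⟩

/-- Complete expansion of the cycle `C_n`. -/
def compExp (n : ℕ) (m : ZMod n → ℕ) : SimpleGraph (Σ i : ZMod n, Fin (m i)) where
  Adj x y := (x.1 = y.1 ∧ x ≠ y) ∨ (x.1 ≠ y.1 ∧ (x.1 = y.1 + 1 ∨ y.1 = x.1 + 1))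
  symm := by
    refine ⟨?_⟩; rintro x y (⟨h, hne⟩ | ⟨h, h2⟩)
    · exact Or.inl ⟨h.symm, hne.symm⟩
    · exact Or.inr ⟨h.symm, h2.symm⟩
  loopless := by refine ⟨?_⟩; rintro x (⟨_, hne⟩ | ⟨h, _⟩); exacts [hne rfl, h rfl]

/-- Distance from a vertex to a set of vertices. -/
noncomputable def distToSet {V : Type*} (G : SimpleGraph V) (S : Set V) (x : V) : ℕ :=
  sInf ((fun y => G.dist x y) '' S)

lemma pair_le (m : ZMod 5 → ℕ) (i : ZMod 5) :
    m i + m (i + 1) ≤ (compExp 5 m).cliqueNum := by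
  have hne : i ≠ i + 1 := by
    intro h
    have h0 : (1 : ZMod 5) = 0 := left_eq_add.mp h
    exact absurd h0 (by decide)
  set s : Finset (Σ j : ZMod 5, Fin (m j)) :=
    (univ.map ⟨Sigma.mk i, sigma_mk_injective⟩) ∪
    (univ.map ⟨Sigma.mk (i+1), sigma_mk_injective⟩) with hs
  have hmem : ∀ x ∈ s, x.1 = i ∨ x.1 = i + 1 := by
    intro x hx
    rw [hs, mem_union, mem_map, mem_map] at hx
    rcases hx with ⟨a, _, rfl⟩ | ⟨a, _, rfl⟩
    · exact Or.inl rfl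
    · exact Or.inr rfl
  have hclique : (compExp 5 m).IsClique s := by
    intro x hx y hy hxy
    rcases hmem x hx with h1 | h1 <;> rcases hmem y hy with h2 | h2
    · exact Or.inl ⟨h1.trans h2.symm, hxy⟩
    · exact Or.inr ⟨by rw [h1, h2]; exact hne, Or.inr (by rw [h1, h2])⟩
    · exact Or.inr ⟨by rw [h1, h2]; exact fun h => hne h.symm, Or.inl (by rw [h1, h2])⟩
    · exact Or.inl ⟨h1.trans h2.symm, hxy⟩
  have hdisj : Disjoint (univ.map ⟨Sigma.mk i, sigma_mk_injective⟩)
      ((univ.map ⟨Sigma.mk (i+1), sigma_mk_injective⟩) :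
        Finset (Σ j : ZMod 5, Fin (m j))) := by
    simp only [Finset.disjoint_left, mem_map, forall_exists_index]
    rintro x a ⟨_, rfl⟩ ⟨b, _, h⟩
    exact hne (congrArg Sigma.fst h).symm
  have hcard : s.card = m i + m (i + 1) := by
    rw [hs, card_union_of_disjoint hdisj, card_map, card_map, card_univ, card_univ,
      Fintype.card_fin, Fintype.card_fin]
  calc m i + m (i + 1) = s.card := hcard.symm
    _ ≤ _ := hclique.card_le_cliqueNum

theorem stmt_19 (m : ZMod 5 → ℕ) (hm : ∀ i, 0 < m i)
    (hmax : (compExp 5 m).cliqueNum = m 0 + m 1) :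
    m 2 ≤ m 0 ∧ m 4 ≤ m 1 ∧
      ((∑ i : ZMod 5, m i) ≤ 2 * (compExp 5 m).cliqueNum →
        m 2 + m 3 + m 4 ≤ (compExp 5 m).cliqueNum) := by
  have h1 := pair_le m 1
  have h4 := pair_le m 4
  have e1 : (1 : ZMod 5) + 1 = 2 := by decide
  have e4 : (4 : ZMod 5) + 1 = 0 := by decide
  rw [e1, hmax] at h1
  rw [e4, hmax] at h4
  have hsum : (∑ i : ZMod 5, m i) = m 0 + m 1 + m 2 + m 3 + m 4 := by
    show (∑ i : Fin 5, m i) = _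
    exact Fin.sum_univ_five (f := m)
  refine ⟨by omega, by omega, fun h => ?_⟩
  rw [hsum, hmax] at h
  omega
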